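/- arXiv:1811.10935 — 3 statements merged into one kernel-verified Lean document; each statement's English description precedes it below -/
import Mathlib

section
/- Let α > 0, K_α(r) = α r^(α-1), z : [0,∞) → ℝ continuous, and b : [0,∞) × ℝ → ℝ₊ continuous and Lipschitz in the second variable uniformly in t on compact time intervals. Then the Volterra integral equation y(t) = z(t) + ∫₀ᵗ K_α(t−s) b(s, y(s)) ds admits a unique continuous solution y on [0,∞). -/
open MeasureTheory Set intervalIntegral Real Topology Filter NNReal

-- kernel integrability
lemma kerInt {α : ℝ} (hα : 0 < α) (t : ℝ) {g : ℝ → ℝ} (ht : 0 ≤ t)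
    (hg : ContinuousOn g (Icc 0 t)) :
    IntervalIntegrable (fun s => α * (t - s) ^ (α - 1) * g s) volume 0 t := by
  have h1 : IntervalIntegrable (fun u : ℝ => u ^ (α - 1)) volume 0 t :=
    intervalIntegrable_rpow' (by linarith)
  have h2 : IntervalIntegrable (fun s : ℝ => (t - s) ^ (α - 1)) volume 0 t := by
    simpa using (h1.comp_sub_left t).symm
  have h3 := (h2.const_mul α).mul_continuousOn (by rwa [uIcc_of_le ht])
  simpa [mul_assoc, mul_comm, mul_left_comm] using h3

lemma EInt' {α : ℝ} (hα : 0 < α) (lam T : ℝ) :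
    IntervalIntegrable (fun u : ℝ => α * u ^ (α - 1) * exp (-(lam * u))) volume 0 T := by
  have h1 : IntervalIntegrable (fun u : ℝ => u ^ (α - 1)) volume 0 T :=
    intervalIntegrable_rpow' (by linarith)
  have := (h1.const_mul α).mul_continuousOn
    (g := fun u => exp (-(lam * u))) (by fun_prop)
  simpa [mul_assoc] using this

lemma kerBound {α : ℝ} (hα : 0 < α) {t T lam C : ℝ} (ht : 0 ≤ t) (htT : t ≤ T)
    {g : ℝ → ℝ}
    (hbd : ∀ s ∈ Icc 0 t, |g s| ≤ C * exp (lam * s)) :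
    |∫ s in (0:ℝ)..t, α * (t - s) ^ (α - 1) * g s| ≤
      C * exp (lam * t) * ∫ u in (0:ℝ)..T, α * u ^ (α - 1) * exp (-(lam * u)) := by
  have hC : 0 ≤ C := by
    have h0 := hbd 0 ⟨le_rfl, ht⟩
    have := abs_nonneg (g 0)
    simp only [mul_zero, exp_zero, mul_one] at h0
    linarith
  set bound : ℝ → ℝ := fun s => α * (t - s) ^ (α - 1) * (C * exp (lam * s)) with hbdef
  have hbint : IntervalIntegrable bound volume 0 t :=
    kerInt hα t ht (by fun_prop)
  have step1 : |∫ s in (0:ℝ)..t, α * (t - s) ^ (α - 1) * g s| ≤ |∫ s in (0:ℝ)..t, bound s| := by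
    rw [← Real.norm_eq_abs]
    apply intervalIntegral.norm_integral_le_abs_of_norm_le _ hbint
    rw [uIoc_of_le ht]
    filter_upwards [ae_restrict_mem measurableSet_Ioc] with s hs
    have h1 : (0:ℝ) ≤ α * (t - s) ^ (α - 1) :=
      mul_nonneg hα.le (rpow_nonneg (by linarith [hs.2]) _)
    calc ‖α * (t - s) ^ (α - 1) * g s‖ = α * (t - s) ^ (α - 1) * |g s| := by
          rw [Real.norm_eq_abs, abs_mul, abs_of_nonneg h1]
      _ ≤ bound s := mul_le_mul_of_nonneg_left (hbd s ⟨hs.1.le, hs.2⟩) h1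
  have step2 : ∫ s in (0:ℝ)..t, bound s
      = C * exp (lam * t) * ∫ u in (0:ℝ)..t, α * u ^ (α - 1) * exp (-(lam * u)) := by
    have hcs := intervalIntegral.integral_comp_sub_left (a := 0) (b := t)
      (fun u => α * u ^ (α - 1) * (C * exp (lam * (t - u)))) t
    simp only [sub_self, sub_zero, sub_sub_cancel] at hcs
    rw [hbdef]
    rw [hcs, ← intervalIntegral.integral_const_mul]
    apply intervalIntegral.integral_congr
    intro u _
    have he : exp (lam * (t - u)) = exp (lam * t) * exp (-(lam * u)) := by
      rw [← Real.exp_add]; ring_nf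
    simp only [he]; ring
  have step3 : ∫ u in (0:ℝ)..t, α * u ^ (α - 1) * exp (-(lam * u))
      ≤ ∫ u in (0:ℝ)..T, α * u ^ (α - 1) * exp (-(lam * u)) := by
    apply intervalIntegral.integral_mono_interval le_rfl ht htT _ (EInt' hα lam T)
    filter_upwards [ae_restrict_mem measurableSet_Ioc] with u hu
    exact mul_nonneg (mul_nonneg hα.le (rpow_nonneg hu.1.le _)) (exp_pos _).le
  have hE0 : 0 ≤ ∫ u in (0:ℝ)..t, α * u ^ (α - 1) * exp (-(lam * u)) := by
    apply intervalIntegral.integral_nonneg ht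
    intro u hu
    exact mul_nonneg (mul_nonneg hα.le (rpow_nonneg hu.1 _)) (exp_pos _).le
  calc |∫ s in (0:ℝ)..t, α * (t - s) ^ (α - 1) * g s| ≤ |∫ s in (0:ℝ)..t, bound s| := step1
    _ = C * exp (lam * t) * ∫ u in (0:ℝ)..t, α * u ^ (α - 1) * exp (-(lam * u)) := by
        rw [step2]; exact abs_of_nonneg (by positivity)
    _ ≤ _ := by
        apply mul_le_mul_of_nonneg_left step3 (by positivity)

lemma lamChoice {α : ℝ} (hα : 0 < α) {T L : ℝ} (hT : 0 ≤ T) (hL : 0 ≤ L) :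
    ∃ lam : ℝ, 0 ≤ lam ∧
      L * (∫ u in (0:ℝ)..T, α * u ^ (α - 1) * exp (-(lam * u))) ≤ 1 / 2 := by
  have hmeas : ∀ lam : ℝ, AEStronglyMeasurable
      (fun u : ℝ => α * u ^ (α - 1) * exp (-(lam * u))) (volume.restrict (Ioc 0 T)) := by
    intro lam
    apply ContinuousOn.aestronglyMeasurable _ measurableSet_Ioc
    apply ContinuousOn.mul
    · exact continuousOn_const.mul (ContinuousOn.rpow_const continuousOn_id
        (fun x hx => Or.inl (ne_of_gt hx.1)))
    · fun_prop
  have hbound : IntegrableOn (fun u : ℝ => α * u ^ (α - 1)) (Ioc 0 T) := by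
    rw [← intervalIntegrable_iff_integrableOn_Ioc_of_le hT]
    exact (intervalIntegrable_rpow' (by linarith)).const_mul α
  have key : Filter.Tendsto
      (fun n : ℕ => L * ∫ u in Ioc (0:ℝ) T, α * u ^ (α - 1) * exp (-((n:ℝ) * u)))
      Filter.atTop (𝓝 (L * 0)) := by
    apply Filter.Tendsto.const_mul
    have key2 : Filter.Tendsto
        (fun n : ℕ => ∫ u in Ioc (0:ℝ) T, α * u ^ (α - 1) * exp (-((n:ℝ) * u)))
        Filter.atTop (𝓝 (∫ _u in Ioc (0:ℝ) T, (0:ℝ))) := by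
      apply tendsto_integral_of_dominated_convergence (fun u => α * u ^ (α - 1))
        (fun n => hmeas _) hbound
      · intro n
        filter_upwards [ae_restrict_mem measurableSet_Ioc] with u hu
        have h1 : (0:ℝ) ≤ α * u ^ (α - 1) := mul_nonneg hα.le (rpow_nonneg hu.1.le _)
        rw [Real.norm_eq_abs, abs_mul, abs_of_nonneg h1, Real.abs_exp]
        apply mul_le_of_le_one_right h1
        exact Real.exp_le_one_iff.mpr (by nlinarith [hu.1])
      · filter_upwards [ae_restrict_mem measurableSet_Ioc] with u hu
        have htd : Filter.Tendsto (fun n : ℕ => exp (-((n:ℝ) * u))) Filter.atTop (𝓝 0) := by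
          have heq : ∀ n : ℕ, exp (-((n:ℝ) * u)) = exp (-u) ^ n := by
            intro n; rw [← Real.exp_nat_mul]; ring_nf
          simp only [heq]
          exact tendsto_pow_atTop_nhds_zero_of_lt_one (exp_nonneg _)
            (Real.exp_lt_one_iff.mpr (by linarith [hu.1]))
        simpa using htd.const_mul (α * u ^ (α - 1))
    simpa using key2
  rw [mul_zero] at key
  obtain ⟨n, hn⟩ := (key.eventually_lt_const (by norm_num : (0:ℝ) < 1/2)).exists
  refine ⟨n, Nat.cast_nonneg n, ?_⟩
  rw [intervalIntegral.integral_of_le hT]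
  exact hn.le

lemma kerCont {α : ℝ} (hα : 0 < α) {T : ℝ} (hT : 0 ≤ T) {g : ℝ → ℝ} (hg : Continuous g) :
    ContinuousOn (fun t => ∫ s in (0:ℝ)..t, α * (t - s) ^ (α - 1) * g s) (Icc 0 T) := by
  obtain ⟨M, hM⟩ := (isCompact_Icc (a := -T) (b := T)).exists_bound_of_continuousOn
    hg.continuousOn
  have hM0 : 0 ≤ M := le_trans (norm_nonneg (g 0)) (hM 0 (by constructor <;> linarith))
  set μ := volume.restrict (Ioc (0:ℝ) T) with hμ
  set F : ℝ → ℝ → ℝ :=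
    fun t => (Ioc (0:ℝ) t).indicator (fun u => α * u ^ (α - 1) * g (t - u)) with hF
  have heq : ∀ t ∈ Icc (0:ℝ) T,
      (∫ s in (0:ℝ)..t, α * (t - s) ^ (α - 1) * g s) = ∫ u, F t u ∂μ := by
    intro t ht
    have hcs := intervalIntegral.integral_comp_sub_left (a := 0) (b := t)
      (fun u => α * u ^ (α - 1) * g (t - u)) t
    simp only [sub_self, sub_zero, sub_sub_cancel] at hcs
    rw [hcs, hμ, hF]
    rw [MeasureTheory.integral_indicator measurableSet_Ioc,
      Measure.restrict_restrict measurableSet_Ioc,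
      inter_eq_self_of_subset_left (Ioc_subset_Ioc_right ht.2),
      intervalIntegral.integral_of_le ht.1]
  apply ContinuousOn.congr _ heq
  intro t₀ ht₀
  apply MeasureTheory.continuousWithinAt_of_dominated
    (bound := fun u => α * u ^ (α - 1) * M)
  · apply Filter.Eventually.of_forall
    intro t
    apply AEStronglyMeasurable.indicator _ measurableSet_Ioc
    apply ContinuousOn.aestronglyMeasurable _ measurableSet_Ioc
    apply ContinuousOn.mul
    · exact continuousOn_const.mul (ContinuousOn.rpow_const continuousOn_id
        (fun x hx => Or.inl (ne_of_gt hx.1)))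
    · fun_prop
  · filter_upwards [self_mem_nhdsWithin] with t ht
    filter_upwards [ae_restrict_mem measurableSet_Ioc] with u hu
    have h1 : (0:ℝ) ≤ α * u ^ (α - 1) := mul_nonneg hα.le (rpow_nonneg hu.1.le _)
    by_cases hmem : u ∈ Ioc (0:ℝ) t
    · simp only [hF, indicator_of_mem hmem]
      rw [Real.norm_eq_abs, abs_mul, abs_of_nonneg h1]
      apply mul_le_mul_of_nonneg_left _ h1
      have h2 := hM (t - u) ⟨by linarith [hmem.2, ht.1, hu.1], by linarith [hmem.1, ht.2]⟩
      rwa [Real.norm_eq_abs] at h2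
    · simp only [hF, indicator_of_notMem hmem]
      simpa using mul_nonneg h1 hM0
  · have : IntervalIntegrable (fun u : ℝ => α * u ^ (α - 1) * M) volume 0 T :=
      ((intervalIntegrable_rpow' (by linarith)).const_mul α).mul_const M
    exact (intervalIntegrable_iff_integrableOn_Ioc_of_le hT).mp this
  · have hne : ∀ᵐ u ∂μ, u ≠ t₀ := by
      apply ae_restrict_of_ae
      rw [ae_iff]
      have : {u : ℝ | ¬u ≠ t₀} = {t₀} := by ext u; simp [not_ne_iff]
      rw [this]
      exact Real.volume_singleton
    filter_upwards [hne] with u hu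
    by_cases hu0 : 0 < u
    · by_cases hlt : u < t₀
      · have hmem₀ : u ∈ Ioc (0:ℝ) t₀ := mem_Ioc.mpr ⟨hu0, hlt.le⟩
        have hev : ∀ᶠ t in 𝓝[Icc (0:ℝ) T] t₀, F t u = α * u ^ (α - 1) * g (t - u) := by
          apply Filter.Eventually.filter_mono nhdsWithin_le_nhds
          filter_upwards [isOpen_Ioi.eventually_mem (show t₀ ∈ Ioi u from hlt)] with t ht
          have hmem' : u ∈ Ioc (0:ℝ) t := mem_Ioc.mpr ⟨hu0, (mem_Ioi.mp ht).le⟩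
          simp only [hF, indicator_of_mem hmem']
        have hval : F t₀ u = α * u ^ (α - 1) * g (t₀ - u) := by
          simp only [hF, indicator_of_mem hmem₀]
        apply ContinuousWithinAt.congr_of_eventuallyEq _ hev hval
        exact ((continuous_const.mul (by fun_prop : Continuous fun t : ℝ => g (t - u)))
          ).continuousWithinAt
      · have hgt : t₀ < u := lt_of_le_of_ne (not_lt.mp hlt) hu.symm
        have hmem₀ : u ∉ Ioc (0:ℝ) t₀ := fun hm => absurd hm.2 (not_le.mpr hgt)
        have hev : ∀ᶠ t in 𝓝[Icc (0:ℝ) T] t₀, F t u = 0 := by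
          apply Filter.Eventually.filter_mono nhdsWithin_le_nhds
          filter_upwards [isOpen_Iio.eventually_mem (show t₀ ∈ Iio u from hgt)] with t ht
          have hmem' : u ∉ Ioc (0:ℝ) t := fun hm => absurd hm.2 (not_le.mpr (mem_Iio.mp ht))
          simp only [hF, indicator_of_notMem hmem']
        have hval : F t₀ u = 0 := by simp only [hF, indicator_of_notMem hmem₀]
        exact ContinuousWithinAt.congr_of_eventuallyEq continuousWithinAt_const hev hval
    · have hz : (fun t => F t u) = fun _ => 0 := by
        funext t
        have hmem' : u ∉ Ioc (0:ℝ) t := fun hm => hu0 hm.1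
        simp only [hF, indicator_of_notMem hmem']
      rw [hz]
      exact continuousWithinAt_const

lemma exists_on {α : ℝ} (hα : 0 < α)
    (z : ℝ → ℝ) (hz : ContinuousOn z (Ici 0))
    (b : ℝ → ℝ → ℝ)
    (hb_cont : ContinuousOn (fun p : ℝ × ℝ => b p.1 p.2) (Ici 0 ×ˢ univ))
    (hb_lip : ∀ T > 0, ∃ L : ℝ, ∀ t ∈ Icc (0:ℝ) T, ∀ x x' : ℝ,
      |b t x - b t x'| ≤ L * |x - x'|)
    {T : ℝ} (hT : 0 < T) :
    ∃ y : ℝ → ℝ, Continuous y ∧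
      ∀ t ∈ Icc (0:ℝ) T, y t = z t + ∫ s in (0:ℝ)..t, α * (t - s) ^ (α - 1) * b s (y s) := by
  have h0T : (0:ℝ) ≤ T := hT.le
  obtain ⟨L₀, hL₀⟩ := hb_lip T hT
  set L := |L₀| with hLdef
  have hL : ∀ t ∈ Icc (0:ℝ) T, ∀ x x' : ℝ, |b t x - b t x'| ≤ L * |x - x'| := by
    intro t ht x x'
    exact le_trans (hL₀ t ht x x')
      (mul_le_mul_of_nonneg_right (le_abs_self _) (abs_nonneg _))
  obtain ⟨lam, hlam0, hlamE⟩ := lamChoice hα h0T (abs_nonneg L₀)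
  set E := ∫ u in (0:ℝ)..T, α * u ^ (α - 1) * exp (-(lam * u)) with hEdef
  -- the extension / composition helpers
  have hgc : ∀ y : C(Icc (0:ℝ) T, ℝ),
      Continuous (fun s : ℝ => b (projIcc 0 T h0T s : ℝ) (IccExtend h0T y s)) := by
    intro y
    exact hb_cont.comp_continuous
      (f := fun s : ℝ => ((projIcc 0 T h0T s : ℝ), IccExtend h0T (⇑y) s))
      ((continuous_subtype_val.comp (continuous_projIcc)).prodMk
        (y.continuous.comp continuous_projIcc))
      (fun x => ⟨(projIcc 0 T h0T x).2.1, mem_univ _⟩)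
  -- the Picard map
  set P : C(Icc (0:ℝ) T, ℝ) → C(Icc (0:ℝ) T, ℝ) := fun y =>
    ⟨fun t => z t + ∫ s in (0:ℝ)..(t:ℝ),
        α * ((t:ℝ) - s) ^ (α - 1) * b (projIcc 0 T h0T s : ℝ) (IccExtend h0T y s),
      (by exact (ContinuousOn.restrict
                  ((hz.mono (Icc_subset_Ici_self)).add (kerCont hα h0T (hgc y)))).congr
                  fun _ => rfl)⟩ with hPdef
  set Φ : C(Icc (0:ℝ) T, ℝ) → C(Icc (0:ℝ) T, ℝ) := fun f =>
    ⟨fun t => exp (-(lam * t)) * f t, by fun_prop⟩ with hΦdef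
  set Ψ : C(Icc (0:ℝ) T, ℝ) → C(Icc (0:ℝ) T, ℝ) := fun f =>
    ⟨fun t => exp (lam * t) * f t, by fun_prop⟩ with hΨdef
  have hΨΦ : ∀ f, Ψ (Φ f) = f := by
    intro f; ext t
    simp only [hΨdef, hΦdef, ContinuousMap.coe_mk]
    rw [← mul_assoc, ← Real.exp_add]
    simp
  have hΦΨ : ∀ f, Φ (Ψ f) = f := by
    intro f; ext t
    simp only [hΨdef, hΦdef, ContinuousMap.coe_mk]
    rw [← mul_assoc, ← Real.exp_add]
    simp
  set Q : C(Icc (0:ℝ) T, ℝ) → C(Icc (0:ℝ) T, ℝ) := fun f => Φ (P (Ψ f)) with hQdef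
  have hQlip : LipschitzWith (1/2 : ℝ≥0) Q := by
    apply LipschitzWith.of_dist_le_mul
    intro f f'
    have hd0 : (0:ℝ) ≤ dist f f' := dist_nonneg
    rw [ContinuousMap.dist_le (by positivity)]
    intro t
    -- pointwise estimate
    have hker := kerBound (T := T) (lam := lam) (C := L * dist f f') hα t.2.1 t.2.2
      (g := fun s => b (projIcc 0 T h0T s : ℝ) (IccExtend h0T (Ψ f) s)
        - b (projIcc 0 T h0T s : ℝ) (IccExtend h0T (Ψ f') s)) ?_
    · have hsub : (P (Ψ f)) t - (P (Ψ f')) t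
          = ∫ s in (0:ℝ)..(t:ℝ), α * ((t:ℝ) - s) ^ (α - 1) *
            (b (projIcc 0 T h0T s : ℝ) (IccExtend h0T (Ψ f) s)
              - b (projIcc 0 T h0T s : ℝ) (IccExtend h0T (Ψ f') s)) := by
        simp only [hPdef, ContinuousMap.coe_mk]
        rw [add_sub_add_left_eq_sub]
        rw [← intervalIntegral.integral_sub
          (kerInt hα _ t.2.1 ((hgc (Ψ f)).continuousOn))
          (kerInt hα _ t.2.1 ((hgc (Ψ f')).continuousOn))]
        have : ∀ s : ℝ, α * ((t:ℝ) - s) ^ (α - 1) *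
              b (projIcc 0 T h0T s : ℝ) (IccExtend h0T (Ψ f) s)
            - α * ((t:ℝ) - s) ^ (α - 1) *
              b (projIcc 0 T h0T s : ℝ) (IccExtend h0T (Ψ f') s)
            = α * ((t:ℝ) - s) ^ (α - 1) *
              (b (projIcc 0 T h0T s : ℝ) (IccExtend h0T (Ψ f) s)
                - b (projIcc 0 T h0T s : ℝ) (IccExtend h0T (Ψ f') s)) := by
          intro s; ring
        simp only [this]
      have hQt : dist (Q f t) (Q f' t)
          = exp (-(lam * t)) * |(P (Ψ f)) t - (P (Ψ f')) t| := by
        simp only [hQdef, hΦdef, ContinuousMap.coe_mk, Real.dist_eq]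
        rw [← mul_sub, abs_mul, Real.abs_exp]
      rw [hQt, hsub]
      calc exp (-(lam * t)) * |∫ s in (0:ℝ)..(t:ℝ), α * ((t:ℝ) - s) ^ (α - 1) *
            (b (projIcc 0 T h0T s : ℝ) (IccExtend h0T (Ψ f) s)
              - b (projIcc 0 T h0T s : ℝ) (IccExtend h0T (Ψ f') s))|
          ≤ exp (-(lam * t)) * (L * dist f f' * exp (lam * t) * E) := by
            exact mul_le_mul_of_nonneg_left hker (exp_pos _).le
        _ = (L * E) * dist f f' := by
            rw [show exp (-(lam * (t:ℝ))) * (L * dist f f' * exp (lam * (t:ℝ)) * E)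
              = (L * E) * dist f f' * (exp (-(lam * (t:ℝ))) * exp (lam * (t:ℝ))) from by ring,
              ← Real.exp_add, neg_add_cancel, Real.exp_zero, mul_one]
        _ ≤ (1/2 : ℝ) * dist f f' := by
            apply mul_le_mul_of_nonneg_right _ hd0
            exact hlamE
    · -- the Lipschitz bound on the difference
      intro s hs
      have hsT : s ∈ Icc (0:ℝ) T := ⟨hs.1, hs.2.trans t.2.2⟩
      have hproj : projIcc 0 T h0T s = ⟨s, hsT⟩ := projIcc_of_mem h0T hsT
      beta_reduce
      rw [hproj]
      have hb1 := hL s hsT (IccExtend h0T (Ψ f) s) (IccExtend h0T (Ψ f') s)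
      apply le_trans hb1
      have : |IccExtend h0T (Ψ f) s - IccExtend h0T (Ψ f') s|
          ≤ exp (lam * s) * dist f f' := by
        have hext : ∀ q : C(Icc (0:ℝ) T, ℝ), IccExtend h0T (Ψ q) s
            = exp (lam * s) * q ⟨s, hsT⟩ := by
          intro q
          rw [IccExtend_of_mem h0T _ hsT]
          simp only [hΨdef, ContinuousMap.coe_mk]
        rw [hext f, hext f', ← mul_sub, abs_mul, Real.abs_exp]
        apply mul_le_mul_of_nonneg_left _ (exp_pos _).le
        exact ContinuousMap.dist_apply_le_dist _ |>.trans_eq' (Real.dist_eq _ _).symm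
      calc L * |IccExtend h0T (Ψ f) s - IccExtend h0T (Ψ f') s|
          ≤ L * (exp (lam * s) * dist f f') := by
            apply mul_le_mul_of_nonneg_left this (abs_nonneg _)
        _ = L * dist f f' * exp (lam * s) := by ring
  -- Banach fixed point
  have hcontr : ContractingWith (1/2 : ℝ≥0) Q := ⟨by rw [← NNReal.coe_lt_coe]; push_cast; norm_num, hQlip⟩
  have hne : Nonempty C(Icc (0:ℝ) T, ℝ) := ⟨0⟩
  set fp := ContractingWith.fixedPoint Q hcontr with hfpdef
  have hfix : Q fp = fp := ContractingWith.fixedPoint_isFixedPt hcontr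
  set ycm := Ψ fp with hycmdef
  have hPfix : P ycm = ycm := by
    have h1 : Φ (P ycm) = fp := hfix
    have h2 := congrArg Ψ h1
    rwa [hΨΦ] at h2
  refine ⟨IccExtend h0T ycm, ycm.continuous.comp continuous_projIcc, ?_⟩
  intro t htm
  have h1 := congrFun (congrArg (fun q : C(Icc (0:ℝ) T, ℝ) => (q : Icc (0:ℝ) T → ℝ)) hPfix)
    ⟨t, htm⟩
  simp only [hPdef, ContinuousMap.coe_mk] at h1
  have h2 : IccExtend h0T ycm t = ycm ⟨t, htm⟩ := IccExtend_of_mem h0T _ htm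
  rw [h2, ← h1]
  congr 1
  apply intervalIntegral.integral_congr
  intro s hs
  rw [uIcc_of_le htm.1] at hs
  have hsT : s ∈ Icc (0:ℝ) T := ⟨hs.1, hs.2.trans htm.2⟩
  have hproj : projIcc 0 T h0T s = ⟨s, hsT⟩ := projIcc_of_mem h0T hsT
  have h3 : IccExtend h0T ycm s = ycm ⟨s, hsT⟩ := IccExtend_of_mem h0T _ hsT
  simp only [hproj, h3]

lemma uniq_on {α : ℝ} (hα : 0 < α)
    (z : ℝ → ℝ)
    (b : ℝ → ℝ → ℝ)
    (hb_cont : ContinuousOn (fun p : ℝ × ℝ => b p.1 p.2) (Ici 0 ×ˢ univ))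
    (hb_lip : ∀ T > 0, ∃ L : ℝ, ∀ t ∈ Icc (0:ℝ) T, ∀ x x' : ℝ,
      |b t x - b t x'| ≤ L * |x - x'|)
    {T : ℝ} (hT : 0 < T) {y₁ y₂ : ℝ → ℝ}
    (h₁c : ContinuousOn y₁ (Icc 0 T)) (h₂c : ContinuousOn y₂ (Icc 0 T))
    (h₁ : ∀ t ∈ Icc (0:ℝ) T, y₁ t = z t + ∫ s in (0:ℝ)..t, α * (t - s) ^ (α - 1) * b s (y₁ s))
    (h₂ : ∀ t ∈ Icc (0:ℝ) T, y₂ t = z t + ∫ s in (0:ℝ)..t, α * (t - s) ^ (α - 1) * b s (y₂ s)) :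
    ∀ t ∈ Icc (0:ℝ) T, y₁ t = y₂ t := by
  have h0T : (0:ℝ) ≤ T := hT.le
  obtain ⟨L₀, hL₀⟩ := hb_lip T hT
  set L := |L₀| with hLdef
  have hL : ∀ t ∈ Icc (0:ℝ) T, ∀ x x' : ℝ, |b t x - b t x'| ≤ L * |x - x'| := by
    intro t ht x x'
    exact le_trans (hL₀ t ht x x')
      (mul_le_mul_of_nonneg_right (le_abs_self _) (abs_nonneg _))
  obtain ⟨lam, hlam0, hlamE⟩ := lamChoice hα h0T (abs_nonneg L₀)
  set E := ∫ u in (0:ℝ)..T, α * u ^ (α - 1) * exp (-(lam * u)) with hEdef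
  have hE0 : 0 ≤ E := by
    apply intervalIntegral.integral_nonneg h0T
    intro u hu
    exact mul_nonneg (mul_nonneg hα.le (rpow_nonneg hu.1 _)) (exp_pos _).le
  set φ : ℝ → ℝ := fun s => exp (-(lam * s)) * |y₁ s - y₂ s| with hφdef
  have hφc : ContinuousOn φ (Icc 0 T) := by
    apply ContinuousOn.mul (by fun_prop)
    exact (h₁c.sub h₂c).abs
  have hφ0 : ∀ s ∈ Icc (0:ℝ) T, 0 ≤ φ s :=
    fun s _ => mul_nonneg (exp_pos _).le (abs_nonneg _)
  obtain ⟨t₀, ht₀m, ht₀max⟩ := isCompact_Icc.exists_isMaxOn (nonempty_Icc.mpr h0T) hφc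
  -- continuity of composed integrands
  have hcomp : ∀ (y : ℝ → ℝ), ContinuousOn y (Icc 0 T) →
      ContinuousOn (fun s => b s (y s)) (Icc 0 t₀) := by
    intro y hy
    have hsub : Icc (0:ℝ) t₀ ⊆ Icc 0 T := Icc_subset_Icc_right ht₀m.2
    apply hb_cont.comp ((continuousOn_id.prodMk (hy.mono hsub)))
    intro x hx
    exact ⟨hx.1, mem_univ _⟩
  have hkey : φ t₀ ≤ 1 / 2 * φ t₀ := by
    have hdiff : y₁ t₀ - y₂ t₀ = ∫ s in (0:ℝ)..t₀,
        α * (t₀ - s) ^ (α - 1) * (b s (y₁ s) - b s (y₂ s)) := by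
      rw [h₁ t₀ ht₀m, h₂ t₀ ht₀m, add_sub_add_left_eq_sub,
        ← intervalIntegral.integral_sub
          (kerInt hα _ ht₀m.1 (hcomp y₁ h₁c)) (kerInt hα _ ht₀m.1 (hcomp y₂ h₂c))]
      apply intervalIntegral.integral_congr
      intro s _
      ring
    have hbd : ∀ s ∈ Icc (0:ℝ) t₀, |b s (y₁ s) - b s (y₂ s)|
        ≤ (L * φ t₀) * exp (lam * s) := by
      intro s hs
      have hsT : s ∈ Icc (0:ℝ) T := ⟨hs.1, hs.2.trans ht₀m.2⟩
      apply le_trans (hL s hsT _ _)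
      have habs : |y₁ s - y₂ s| = exp (lam * s) * φ s := by
        rw [hφdef]
        rw [← mul_assoc, ← Real.exp_add, add_neg_cancel, Real.exp_zero, one_mul]
      rw [habs]
      have := ht₀max hsT
      calc L * (exp (lam * s) * φ s) ≤ L * (exp (lam * s) * φ t₀) := by
            apply mul_le_mul_of_nonneg_left _ (abs_nonneg _)
            exact mul_le_mul_of_nonneg_left this (exp_pos _).le
        _ = (L * φ t₀) * exp (lam * s) := by ring
    have hker := kerBound (T := T) (lam := lam) (C := L * φ t₀) hα ht₀m.1 ht₀m.2 hbd
    have : φ t₀ ≤ (L * E) * φ t₀ := by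
      rw [hφdef]
      calc exp (-(lam * t₀)) * |y₁ t₀ - y₂ t₀|
          ≤ exp (-(lam * t₀)) * ((L * φ t₀) * exp (lam * t₀) * E) := by
            apply mul_le_mul_of_nonneg_left _ (exp_pos _).le
            rw [hdiff]; exact hker
        _ = (L * E) * φ t₀ * (exp (-(lam * t₀)) * exp (lam * t₀)) := by ring
        _ = (L * E) * φ t₀ := by
            rw [← Real.exp_add, neg_add_cancel, Real.exp_zero, mul_one]
    apply le_trans this
    exact mul_le_mul_of_nonneg_right hlamE (hφ0 t₀ ht₀m)
  have hφt₀ : φ t₀ ≤ 0 := by linarith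
  intro t htm
  have h1 : φ t ≤ 0 := le_trans (ht₀max htm) hφt₀
  have h2 : 0 ≤ φ t := hφ0 t htm
  have h3 : φ t = 0 := le_antisymm h1 h2
  rw [hφdef] at h3
  have h4 : |y₁ t - y₂ t| = 0 := by
    rcases mul_eq_zero.mp h3 with h | h
    · exact absurd h (exp_pos _).ne'
    · exact h
  have := abs_eq_zero.mp h4
  linarith


/-- **Existence and uniqueness for the Volterra integral equation**
`y(t) = z(t) + ∫₀ᵗ α (t-s)^(α-1) b(s, y(s)) ds` on `[0,∞)`, where `b` is continuous,
nonnegative, and Lipschitz in its second variable uniformly in `t` on compact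
time intervals. -/
theorem volterra_exists_unique
    (α : ℝ) (hα : 0 < α)
    (z : ℝ → ℝ) (hz : ContinuousOn z (Ici 0))
    (b : ℝ → ℝ → ℝ)
    (hb_cont : ContinuousOn (fun p : ℝ × ℝ => b p.1 p.2) (Ici 0 ×ˢ univ))
    (hb_nonneg : ∀ t x, 0 ≤ t → 0 ≤ b t x)
    (hb_lip : ∀ T > 0, ∃ L : ℝ, ∀ t ∈ Icc (0:ℝ) T, ∀ x x' : ℝ,
      |b t x - b t x'| ≤ L * |x - x'|) :
    ∃ y : ℝ → ℝ, (ContinuousOn y (Ici 0) ∧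
        ∀ t ≥ (0:ℝ), y t = z t + ∫ s in (0:ℝ)..t, α * (t - s) ^ (α - 1) * b s (y s)) ∧
      ∀ y' : ℝ → ℝ, (ContinuousOn y' (Ici 0) ∧
          ∀ t ≥ (0:ℝ), y' t = z t + ∫ s in (0:ℝ)..t, α * (t - s) ^ (α - 1) * b s (y' s)) →
        ∀ t ≥ (0:ℝ), y' t = y t := by
  have hex : ∀ n : ℕ, ∃ y : ℝ → ℝ, Continuous y ∧
      ∀ t ∈ Icc (0:ℝ) ((n:ℝ)+1), y t = z t + ∫ s in (0:ℝ)..t,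
        α * (t - s) ^ (α - 1) * b s (y s) :=
    fun n => exists_on hα z hz b hb_cont hb_lip (by positivity)
  choose sol hsolc hsol using hex
  have hcons : ∀ m n : ℕ, m ≤ n → ∀ t ∈ Icc (0:ℝ) ((m:ℝ)+1), sol n t = sol m t := by
    intro m n hmn
    apply uniq_on hα z b hb_cont hb_lip (by positivity : (0:ℝ) < (m:ℝ)+1)
      ((hsolc n).continuousOn) ((hsolc m).continuousOn)
    · intro t htm
      apply hsol n t
      refine ⟨htm.1, htm.2.trans ?_⟩
      have h := (Nat.cast_le (α := ℝ)).mpr hmn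
      linarith
    · exact fun t htm => hsol m t htm
  set y : ℝ → ℝ := fun t => sol ⌊t⌋₊ t with hydef
  have hagree : ∀ n : ℕ, ∀ t ∈ Icc (0:ℝ) ((n:ℝ)+1), y t = sol n t := by
    intro n t htm
    have hfl : t < (⌊t⌋₊ : ℝ) + 1 := Nat.lt_floor_add_one t
    rcases le_total ⌊t⌋₊ n with h | h
    · exact (hcons ⌊t⌋₊ n h t ⟨htm.1, hfl.le⟩).symm
    · exact hcons n ⌊t⌋₊ h t htm
  have hycont : ContinuousOn y (Ici 0) := by
    intro t₀ ht₀
    have hfl : t₀ < (⌊t₀⌋₊ : ℝ) + 1 := Nat.lt_floor_add_one t₀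
    apply ContinuousWithinAt.congr_of_eventuallyEq
      ((hsolc ⌊t₀⌋₊).continuousAt.continuousWithinAt)
    · filter_upwards [Filter.Eventually.filter_mono nhdsWithin_le_nhds
        (isOpen_Iio.eventually_mem (show t₀ ∈ Iio ((⌊t₀⌋₊:ℝ)+1) from hfl)),
        self_mem_nhdsWithin] with t ht1 ht2
      exact hagree ⌊t₀⌋₊ t ⟨ht2, (mem_Iio.mp ht1).le⟩
    · rfl
  have hyeq : ∀ t ≥ (0:ℝ), y t = z t + ∫ s in (0:ℝ)..t,
      α * (t - s) ^ (α - 1) * b s (y s) := by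
    intro t ht
    have hfl : t < (⌊t⌋₊ : ℝ) + 1 := Nat.lt_floor_add_one t
    have htm : t ∈ Icc (0:ℝ) ((⌊t⌋₊:ℝ)+1) := ⟨ht, hfl.le⟩
    have h1 : y t = sol ⌊t⌋₊ t := rfl
    rw [h1, hsol ⌊t⌋₊ t htm]
    congr 1
    apply intervalIntegral.integral_congr
    intro s hs
    rw [uIcc_of_le ht] at hs
    have h2 := hagree ⌊t⌋₊ s ⟨hs.1, hs.2.trans hfl.le⟩
    simp only [← h2]
  refine ⟨y, ⟨hycont, hyeq⟩, ?_⟩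
  rintro y' ⟨h'c, h'eq⟩ t ht
  have hT : (0:ℝ) < t + 1 := by linarith
  have hIcc : Icc (0:ℝ) (t+1) ⊆ Ici 0 := Icc_subset_Ici_self
  exact uniq_on hα z b hb_cont hb_lip hT
    (h'c.mono hIcc) (hycont.mono hIcc)
    (fun τ hτ => h'eq τ hτ.1) (fun τ hτ => hyeq τ hτ.1)
    t ⟨ht, by linarith⟩
end

section
/- Let α > 0, K_α(r) = α r^(α−1), z continuous, and b : [0,∞) × ℝ → ℝ₊ continuous, nondecreasing in x, and locally Lipschitz in x uniformly in t on compact intervals. If y is the maximal continuous solution of y(t) = z(t) + ∫₀ᵗ K_α(t−s) b(s,y(s)) ds on [0,T∞), and u : [0,T] → ℝ (T < T∞) is continuous with u(t) ≤ z(t) + ∫₀ᵗ K_α(t−s) b(s,u(s)) ds for all t ∈ [0,T], then u(t) ≤ y(t) for all t ∈ [0,T]. -/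
open MeasureTheory Set Filter

private lemma volterra_ker_integrable (α t : ℝ) (hα : 0 < α) {a c : ℝ} (hac : a ≤ c)
    (g : ℝ → ℝ) (hg : ContinuousOn g (Icc a c)) :
    IntervalIntegrable (fun s => α * (t - s) ^ (α - 1) * g s) volume a c := by
  have h1 : IntervalIntegrable (fun x : ℝ => x ^ (α - 1)) volume (t - a) (t - c) :=
    intervalIntegral.intervalIntegrable_rpow' (by linarith)
  have h2 : IntervalIntegrable (fun s : ℝ => (t - s) ^ (α - 1)) volume a c := by
    simpa using h1.comp_sub_left t
  exact (h2.const_mul α).mul_continuousOn (by rwa [uIcc_of_le hac])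

private lemma volterra_ker_integral (α : ℝ) (hα : 0 < α) {a t : ℝ} (hat : a ≤ t) :
    (∫ s in a..t, α * (t - s) ^ (α - 1)) = (t - a) ^ α := by
  rw [intervalIntegral.integral_const_mul]
  have h1 : (∫ s in a..t, (t - s) ^ (α - 1)) = ∫ x in (t - t)..(t - a), x ^ (α - 1) :=
    intervalIntegral.integral_comp_sub_left (fun x => x ^ (α - 1)) t
  have hea : α - 1 + 1 = α := by ring
  rw [h1, sub_self, integral_rpow (Or.inl (by linarith)), hea,
    Real.zero_rpow hα.ne', sub_zero]
  field_simp

/-- **Comparison principle for Volterra integral equations.**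
If `y` is the maximal continuous solution of
`y(t) = z(t) + ∫₀ᵗ α (t-s)^(α-1) b(s, y(s)) ds` on `[0, T∞)` (blowing up at `T∞` if
`T∞ < ∞`), and `u` is a continuous subsolution on `[0,T]` with `T < T∞`, then `u ≤ y`
on `[0,T]`. -/
theorem volterra_comparison
    (α : ℝ) (hα : 0 < α)
    (z : ℝ → ℝ) (hz : ContinuousOn z (Ici 0))
    (b : ℝ → ℝ → ℝ)
    (hb_cont : ContinuousOn (fun p : ℝ × ℝ => b p.1 p.2) (Ici 0 ×ˢ univ))
    (hb_nonneg : ∀ t x, 0 ≤ t → 0 ≤ b t x)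
    (hb_mono : ∀ t ≥ (0:ℝ), Monotone (b t))
    (hb_lip : ∀ T > 0, ∀ R > 0, ∃ L : ℝ, ∀ t ∈ Icc (0:ℝ) T, ∀ x ∈ Icc (-R) R, ∀ x' ∈ Icc (-R) R,
      |b t x - b t x'| ≤ L * |x - x'|)
    (Tinf : ENNReal) (y : ℝ → ℝ)
    -- `y` is a continuous solution on `[0, T∞)`
    (hy_cont : ∀ t : ℝ, 0 ≤ t → ENNReal.ofReal t < Tinf → ContinuousOn y (Icc 0 t))
    (hy_sol : ∀ t : ℝ, 0 ≤ t → ENNReal.ofReal t < Tinf →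
      y t = z t + ∫ s in (0:ℝ)..t, α * (t - s) ^ (α - 1) * b s (y s))
    -- blow-up at `T∞` when `T∞ < ∞` (maximality)
    (hy_blowup : Tinf ≠ ⊤ →
      Tendsto y (nhdsWithin Tinf.toReal (Iio Tinf.toReal)) atTop)
    (T : ℝ) (hT : 0 ≤ T) (hTlt : ENNReal.ofReal T < Tinf)
    (u : ℝ → ℝ) (hu_cont : ContinuousOn u (Icc 0 T))
    (hu_sub : ∀ t ∈ Icc (0:ℝ) T,
      u t ≤ z t + ∫ s in (0:ℝ)..t, α * (t - s) ^ (α - 1) * b s (u s)) :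
    ∀ t ∈ Icc (0:ℝ) T, u t ≤ y t := by
  have hTt : ∀ t ∈ Icc (0:ℝ) T, ENNReal.ofReal t < Tinf := fun t ht =>
    lt_of_le_of_lt (ENNReal.ofReal_le_ofReal ht.2) hTlt
  have hyc : ContinuousOn y (Icc 0 T) := hy_cont T hT hTlt
  have hsol : ∀ t ∈ Icc (0:ℝ) T,
      y t = z t + ∫ s in (0:ℝ)..t, α * (t - s) ^ (α - 1) * b s (y s) :=
    fun t ht => hy_sol t ht.1 (hTt t ht)
  -- continuity of the compositions
  have hmap : ∀ f : ℝ → ℝ, ContinuousOn f (Icc 0 T) →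
      ContinuousOn (fun s => b s (f s)) (Icc 0 T) := by
    intro f hf
    exact hb_cont.comp (continuousOn_id.prodMk hf) (fun s hs => ⟨hs.1, trivial⟩)
  have hbu : ContinuousOn (fun s => b s (u s)) (Icc 0 T) := hmap u hu_cont
  have hby : ContinuousOn (fun s => b s (y s)) (Icc 0 T) := hmap y hyc
  -- a common bound on `u` and `y`
  obtain ⟨Cu, hCu⟩ := isCompact_Icc.exists_bound_of_continuousOn hu_cont
  obtain ⟨Cy, hCy⟩ := isCompact_Icc.exists_bound_of_continuousOn hyc
  set R : ℝ := max Cu Cy + 1 with hRdef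
  have hCu0 : (0:ℝ) ≤ Cu := le_trans (norm_nonneg _) (hCu 0 ⟨le_rfl, hT⟩)
  have hR0 : 0 < R := by
    have := le_max_left Cu Cy; simp only [hRdef]; linarith
  have humem : ∀ s ∈ Icc (0:ℝ) T, u s ∈ Icc (-R) R := by
    intro s hs
    have := hCu s hs
    rw [Real.norm_eq_abs, abs_le] at this
    have h1 := le_max_left Cu Cy
    constructor <;> simp only [hRdef] <;> linarith
  have hymem : ∀ s ∈ Icc (0:ℝ) T, y s ∈ Icc (-R) R := by
    intro s hs
    have := hCy s hs
    rw [Real.norm_eq_abs, abs_le] at this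
    have h1 := le_max_right Cu Cy
    constructor <;> simp only [hRdef] <;> linarith
  -- Lipschitz constant
  obtain ⟨L0, hL0⟩ := hb_lip (T + 1) (by linarith) R hR0
  set L : ℝ := max L0 1 with hLdef
  have hL1 : (1:ℝ) ≤ L := le_max_right _ _
  have hLpos : 0 < L := lt_of_lt_of_le one_pos hL1
  have hLip : ∀ s ∈ Icc (0:ℝ) T, ∀ x ∈ Icc (-R) R, ∀ x' ∈ Icc (-R) R,
      |b s x - b s x'| ≤ L * |x - x'| := by
    intro s hs x hx x' hx'
    calc |b s x - b s x'| ≤ L0 * |x - x'| :=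
          hL0 s ⟨hs.1, by linarith [hs.2]⟩ x hx x' hx'
      _ ≤ L * |x - x'| := mul_le_mul_of_nonneg_right (le_max_left _ _) (abs_nonneg _)
  -- the step size
  set δ : ℝ := (1 / (2 * L)) ^ α⁻¹ with hδdef
  have h2L : (0:ℝ) < 1 / (2 * L) := one_div_pos.2 (by linarith)
  have hδpos : 0 < δ := Real.rpow_pos_of_pos h2L _
  have hδα : L * δ ^ α = 1 / 2 := by
    rw [hδdef, Real.rpow_inv_rpow h2L.le hα.ne', mul_one_div, mul_comm 2 L, ← div_div,
      div_self hLpos.ne']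
  -- the bootstrap step
  have step : ∀ t₀ t₁ : ℝ, 0 ≤ t₀ → t₀ ≤ t₁ → t₁ ≤ T → L * (t₁ - t₀) ^ α ≤ 1 / 2 →
      (∀ s ∈ Icc (0:ℝ) t₀, u s ≤ y s) → ∀ s ∈ Icc (0:ℝ) t₁, u s ≤ y s := by
    intro t₀ t₁ ht₀ ht₀₁ ht₁T hsmall hind
    have ht₀T : t₀ ≤ T := le_trans ht₀₁ ht₁T
    have hsub1 : Icc t₀ t₁ ⊆ Icc (0:ℝ) T := Icc_subset_Icc ht₀ ht₁T
    have hfc : ContinuousOn (fun s => max (u s - y s) 0) (Icc t₀ t₁) :=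
      ContinuousOn.sup ((hu_cont.mono hsub1).sub (hyc.mono hsub1)) continuousOn_const
    obtain ⟨sm, hsm, hsmax⟩ := isCompact_Icc.exists_isMaxOn (nonempty_Icc.2 ht₀₁) hfc
    set M : ℝ := max (u sm - y sm) 0 with hMdef
    have hM0 : 0 ≤ M := le_max_right _ _
    have hMb : ∀ s ∈ Icc t₀ t₁, u s - y s ≤ M := fun s hs =>
      le_trans (le_max_left _ _) (hsmax hs)
    have key : ∀ t ∈ Icc t₀ t₁, u t - y t ≤ M / 2 := by
      intro t ht
      have ht0 : 0 ≤ t := le_trans ht₀ ht.1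
      have htT : t ≤ T := le_trans ht.2 ht₁T
      have htmem : t ∈ Icc (0:ℝ) T := ⟨ht0, htT⟩
      have Iu := volterra_ker_integrable α t hα ht0 _ (hbu.mono (Icc_subset_Icc le_rfl htT))
      have Iy := volterra_ker_integrable α t hα ht0 _ (hby.mono (Icc_subset_Icc le_rfl htT))
      have Iu1 := volterra_ker_integrable α t hα ht₀ _ (hbu.mono (Icc_subset_Icc le_rfl ht₀T))
      have Iy1 := volterra_ker_integrable α t hα ht₀ _ (hby.mono (Icc_subset_Icc le_rfl ht₀T))
      have Iu2 := volterra_ker_integrable α t hα ht.1 _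
        (hbu.mono (Icc_subset_Icc ht₀ htT))
      have Iy2 := volterra_ker_integrable α t hα ht.1 _
        (hby.mono (Icc_subset_Icc ht₀ htT))
      have h1 : u t - y t ≤ ∫ s in (0:ℝ)..t,
          (α * (t - s) ^ (α - 1) * b s (u s) - α * (t - s) ^ (α - 1) * b s (y s)) := by
        rw [intervalIntegral.integral_sub Iu Iy]
        have h2 := hu_sub t htmem
        have h3 := hsol t htmem
        linarith
      have split : (∫ s in (0:ℝ)..t,
            (α * (t - s) ^ (α - 1) * b s (u s) - α * (t - s) ^ (α - 1) * b s (y s)))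
          = (∫ s in (0:ℝ)..t₀,
            (α * (t - s) ^ (α - 1) * b s (u s) - α * (t - s) ^ (α - 1) * b s (y s)))
          + ∫ s in t₀..t,
            (α * (t - s) ^ (α - 1) * b s (u s) - α * (t - s) ^ (α - 1) * b s (y s)) :=
        (intervalIntegral.integral_add_adjacent_intervals (Iu1.sub Iy1) (Iu2.sub Iy2)).symm
      have ker_nonneg : ∀ s : ℝ, s ≤ t → 0 ≤ α * (t - s) ^ (α - 1) := fun s hs =>
        mul_nonneg hα.le (Real.rpow_nonneg (by linarith) _)
      have part1 : (∫ s in (0:ℝ)..t₀,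
          (α * (t - s) ^ (α - 1) * b s (u s) - α * (t - s) ^ (α - 1) * b s (y s))) ≤ 0 := by
        have hm : (∫ s in (0:ℝ)..t₀,
            (α * (t - s) ^ (α - 1) * b s (u s) - α * (t - s) ^ (α - 1) * b s (y s)))
            ≤ ∫ _s in (0:ℝ)..t₀, (0:ℝ) := by
          apply intervalIntegral.integral_mono_on ht₀ (Iu1.sub Iy1) intervalIntegrable_const
          intro s hs
          have hb1 : b s (u s) ≤ b s (y s) := hb_mono s hs.1 (hind s hs)
          have hk := ker_nonneg s (le_trans hs.2 ht.1)
          show α * (t - s) ^ (α - 1) * b s (u s) - α * (t - s) ^ (α - 1) * b s (y s) ≤ (0:ℝ)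
          nlinarith
        simpa using hm
      have part2 : (∫ s in t₀..t,
          (α * (t - s) ^ (α - 1) * b s (u s) - α * (t - s) ^ (α - 1) * b s (y s)))
          ≤ (t - t₀) ^ α * (L * M) := by
        have hm : (∫ s in t₀..t,
            (α * (t - s) ^ (α - 1) * b s (u s) - α * (t - s) ^ (α - 1) * b s (y s)))
            ≤ ∫ s in t₀..t, α * (t - s) ^ (α - 1) * (L * M) := by
          apply intervalIntegral.integral_mono_on ht.1 (Iu2.sub Iy2)
            (volterra_ker_integrable α t hα ht.1 _ continuousOn_const)
          intro s hs
          have hsT : s ∈ Icc (0:ℝ) T := ⟨le_trans ht₀ hs.1, le_trans hs.2 htT⟩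
          have hdiff : b s (u s) - b s (y s) ≤ L * M := by
            rcases le_or_gt (u s) (y s) with h | h
            · have hb1 : b s (u s) ≤ b s (y s) := hb_mono s hsT.1 h
              nlinarith
            · have habs := hLip s hsT (u s) (humem s hsT) (y s) (hymem s hsT)
              have h2 : |u s - y s| = u s - y s := abs_of_pos (by linarith)
              have h3 : u s - y s ≤ M := hMb s ⟨hs.1, le_trans hs.2 ht.2⟩
              calc b s (u s) - b s (y s) ≤ |b s (u s) - b s (y s)| := le_abs_self _
                _ ≤ L * |u s - y s| := habs
                _ = L * (u s - y s) := by rw [h2]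
                _ ≤ L * M := by nlinarith
          have hk := ker_nonneg s hs.2
          show α * (t - s) ^ (α - 1) * b s (u s) - α * (t - s) ^ (α - 1) * b s (y s)
            ≤ α * (t - s) ^ (α - 1) * (L * M)
          nlinarith
        have hval : (∫ s in t₀..t, α * (t - s) ^ (α - 1) * (L * M))
            = (t - t₀) ^ α * (L * M) := by
          rw [intervalIntegral.integral_mul_const, volterra_ker_integral α hα ht.1]
        linarith [hm, hval]
      have hfin : (t - t₀) ^ α * (L * M) ≤ M / 2 := by
        have h1' : (t - t₀) ^ α ≤ (t₁ - t₀) ^ α :=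
          Real.rpow_le_rpow (by linarith [ht.1]) (by linarith [ht.2]) hα.le
        have hLM : 0 ≤ L * M := mul_nonneg hLpos.le hM0
        calc (t - t₀) ^ α * (L * M) ≤ (t₁ - t₀) ^ α * (L * M) :=
              mul_le_mul_of_nonneg_right h1' hLM
          _ = (L * (t₁ - t₀) ^ α) * M := by ring
          _ ≤ (1 / 2) * M := mul_le_mul_of_nonneg_right hsmall hM0
          _ = M / 2 := by ring
      linarith [h1, split, part1, part2, hfin]
    have hM2 : M ≤ M / 2 := by
      have hk := key sm hsm
      rw [hMdef]
      exact max_le hk (by linarith)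
    have hMzero : M = 0 := by linarith
    intro s hs
    rcases le_or_gt s t₀ with h | h
    · exact hind s ⟨hs.1, h⟩
    · have := hMb s ⟨h.le, hs.2⟩
      linarith [hMzero ▸ this]
  -- base case
  have base : ∀ s ∈ Icc (0:ℝ) (0:ℝ), u s ≤ y s := by
    intro s hs
    have hs0 : s = 0 := le_antisymm hs.2 hs.1
    subst hs0
    have h1 := hu_sub 0 ⟨le_rfl, hT⟩
    have h2 := hsol 0 ⟨le_rfl, hT⟩
    rw [intervalIntegral.integral_same] at h1 h2
    linarith
  -- the supremum argument
  set S : Set ℝ := {t | t ∈ Icc (0:ℝ) T ∧ ∀ s ∈ Icc (0:ℝ) t, u s ≤ y s} with hSdef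
  have hS0 : (0:ℝ) ∈ S := ⟨⟨le_rfl, hT⟩, base⟩
  have hSbdd : BddAbove S := ⟨T, fun x hx => hx.1.2⟩
  have hSne : S.Nonempty := ⟨0, hS0⟩
  set t₀ : ℝ := sSup S with ht₀def
  have ht₀0 : 0 ≤ t₀ := le_csSup hSbdd hS0
  have ht₀T : t₀ ≤ T := csSup_le hSne fun x hx => hx.1.2
  have hIco : ∀ x ∈ Ico (0:ℝ) t₀, u x ≤ y x := by
    intro x hx
    obtain ⟨w, hwS, hw⟩ := exists_lt_of_lt_csSup hSne hx.2
    exact hwS.2 x ⟨hx.1, hw.le⟩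
  have ht₀pt : u t₀ ≤ y t₀ := by
    rcases eq_or_lt_of_le ht₀0 with h0 | h0
    · exact base t₀ ⟨ht₀0, h0.symm.le⟩
    · have hcl : t₀ ∈ closure (Ico (0:ℝ) t₀) := by
        rw [closure_Ico h0.ne]
        exact ⟨h0.le, le_rfl⟩
      haveI hne : (nhdsWithin t₀ (Ico (0:ℝ) t₀)).NeBot :=
        mem_closure_iff_nhdsWithin_neBot.1 hcl
      have hct : ContinuousWithinAt (fun x => u x - y x) (Ico (0:ℝ) t₀) t₀ :=
        ((hu_cont.sub hyc) t₀ ⟨ht₀0, ht₀T⟩).mono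
          (fun x hx => ⟨hx.1, le_trans hx.2.le ht₀T⟩)
      have hev : ∀ᶠ x in nhdsWithin t₀ (Ico (0:ℝ) t₀), u x - y x ≤ 0 :=
        eventually_nhdsWithin_of_forall (fun x hx => sub_nonpos.2 (hIco x hx))
      have hle := le_of_tendsto hct hev
      have : u t₀ - y t₀ ≤ 0 := by simpa using hle
      linarith
  have ht₀S : ∀ s ∈ Icc (0:ℝ) t₀, u s ≤ y s := by
    intro s hs
    rcases lt_or_eq_of_le hs.2 with h | h
    · exact hIco s ⟨hs.1, h⟩
    · rw [h]; exact ht₀pt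
  have ht₀eq : t₀ = T := by
    by_contra hneq
    have hlt : t₀ < T := lt_of_le_of_ne ht₀T hneq
    set t₁ : ℝ := min T (t₀ + δ) with ht₁def
    have h01 : t₀ ≤ t₁ := le_min hlt.le (by linarith)
    have h01' : t₀ < t₁ := lt_min hlt (by linarith)
    have ht₁T : t₁ ≤ T := min_le_left _ _
    have hsmall : L * (t₁ - t₀) ^ α ≤ 1 / 2 := by
      have h1 : t₁ - t₀ ≤ δ := by
        have := min_le_right T (t₀ + δ); simp only [ht₁def]; linarith
      have h2 : (t₁ - t₀) ^ α ≤ δ ^ α :=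
        Real.rpow_le_rpow (by linarith) h1 hα.le
      calc L * (t₁ - t₀) ^ α ≤ L * δ ^ α := mul_le_mul_of_nonneg_left h2 hLpos.le
        _ = 1 / 2 := hδα
    have hstep := step t₀ t₁ ht₀0 h01 ht₁T hsmall ht₀S
    have ht₁S : t₁ ∈ S := ⟨⟨le_trans ht₀0 h01, ht₁T⟩, hstep⟩
    have : t₁ ≤ t₀ := le_csSup hSbdd ht₁S
    linarith
  intro t ht
  exact ht₀S t ⟨ht.1, ht₀eq ▸ ht.2⟩
end

section
/- Let α > 0, K_α(r) = α r^(α−1), and suppose z is continuous and nondecreasing, and b : [0,∞) × ℝ → ℝ₊ is continuous, nondecreasing in x and locally Lipschitz in x uniformly in t on compacts, with z(t) nondecreasing in t and b(t,x) nondecreasing in t for each fixed x. Then the maximal solution y of y(t) = z(t) + ∫₀ᵗ K_α(t−s) b(s,y(s)) ds is nondecreasing on its interval of existence. -/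
open MeasureTheory Set Filter


lemma volterra_kernel_integrable {α : ℝ} (hα : 0 < α) (u a c : ℝ) :
    IntervalIntegrable (fun v => α * (u - v) ^ (α - 1)) volume a c := by
  have h : IntervalIntegrable (fun x : ℝ => x ^ (α - 1)) volume (u - a) (u - c) :=
    intervalIntegral.intervalIntegrable_rpow' (by linarith)
  simpa using (h.comp_sub_left u).const_mul α

lemma volterra_kernel_integral {α : ℝ} (hα : 0 < α) (a u : ℝ) :
    (∫ v in a..u, α * (u - v) ^ (α - 1)) = (u - a) ^ α := by
  have h1 := intervalIntegral.integral_comp_sub_left (a := a) (b := u)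
    (fun x : ℝ => α * x ^ (α - 1)) u
  simp only [sub_self] at h1
  rw [h1, intervalIntegral.integral_const_mul,
    integral_rpow (Or.inl (by linarith)), sub_add_cancel,
    Real.zero_rpow hα.ne', sub_zero, mul_div_cancel₀ _ hα.ne']

/-- **Monotonicity of solutions of Volterra integral equations.**
If `z` is continuous and nondecreasing and `b ≥ 0` is continuous, nondecreasing in each
variable and locally Lipschitz in `x` uniformly in `t` on compacts, then the maximal
solution `y` of `y(t) = z(t) + ∫₀ᵗ α (t-s)^(α-1) b(s, y(s)) ds` is nondecreasing
on its interval of existence `[0, T∞)`. -/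
theorem volterra_monotone
    (α : ℝ) (hα : 0 < α)
    (z : ℝ → ℝ) (hz : ContinuousOn z (Ici 0))
    (hz_mono : MonotoneOn z (Ici 0))
    (b : ℝ → ℝ → ℝ)
    (hb_cont : ContinuousOn (fun p : ℝ × ℝ => b p.1 p.2) (Ici 0 ×ˢ univ))
    (hb_nonneg : ∀ t x, 0 ≤ t → 0 ≤ b t x)
    (hb_mono_x : ∀ t ≥ (0:ℝ), Monotone (b t))
    (hb_mono_t : ∀ x : ℝ, MonotoneOn (fun t => b t x) (Ici 0))
    (hb_lip : ∀ T > 0, ∀ R > 0, ∃ L : ℝ, ∀ t ∈ Icc (0:ℝ) T, ∀ x ∈ Icc (-R) R, ∀ x' ∈ Icc (-R) R,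
      |b t x - b t x'| ≤ L * |x - x'|)
    (Tinf : ENNReal) (y : ℝ → ℝ)
    -- `y` is a continuous solution on `[0, T∞)`
    (hy_cont : ∀ t : ℝ, 0 ≤ t → ENNReal.ofReal t < Tinf → ContinuousOn y (Icc 0 t))
    (hy_sol : ∀ t : ℝ, 0 ≤ t → ENNReal.ofReal t < Tinf →
      y t = z t + ∫ s in (0:ℝ)..t, α * (t - s) ^ (α - 1) * b s (y s))
    -- blow-up at `T∞` when `T∞ < ∞` (maximality)
    (hy_blowup : Tinf ≠ ⊤ →
      Tendsto y (nhdsWithin Tinf.toReal (Iio Tinf.toReal)) atTop) :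
    ∀ s t : ℝ, 0 ≤ s → s ≤ t → ENNReal.ofReal t < Tinf → y s ≤ y t := by
  intro s t hs hst ht
  rcases eq_or_lt_of_le hst with rfl | hst'
  · exact le_rfl
  have hT : (0:ℝ) < t := lt_of_le_of_lt hs hst'
  have hofR : ∀ u : ℝ, u ≤ t → ENNReal.ofReal u < Tinf :=
    fun u hu => lt_of_le_of_lt (ENNReal.ofReal_le_ofReal hu) ht
  have hy : ContinuousOn y (Icc 0 t) := hy_cont t hT.le ht
  obtain ⟨R0, hR0⟩ := (isCompact_Icc : IsCompact (Icc (0:ℝ) t)).exists_bound_of_continuousOn hy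
  set R : ℝ := max R0 0 + 1 with hRdef
  have hRpos : 0 < R := by positivity
  have hyR : ∀ u ∈ Icc (0:ℝ) t, y u ∈ Icc (-R) R := by
    intro u hu
    have h1 : |y u| ≤ R0 := by simpa using hR0 u hu
    have h2 := abs_le.1 h1
    have h3 : R0 ≤ max R0 0 := le_max_left _ _
    exact ⟨by rw [hRdef]; linarith [h2.1], by rw [hRdef]; linarith [h2.2]⟩
  obtain ⟨L0, hL0⟩ := hb_lip t hT R hRpos
  set L : ℝ := max L0 0 with hLdef
  have hL : 0 ≤ L := le_max_right _ _
  set δ : ℝ := (1 / (2 * (L + 1))) ^ (α⁻¹ : ℝ) with hδdef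
  have hδpos : 0 < δ := Real.rpow_pos_of_pos (by positivity) _
  have hδα : δ ^ α = 1 / (2 * (L + 1)) := Real.rpow_inv_rpow (by positivity) hα.ne'
  have hLδ : L * δ ^ α ≤ 1 / 2 := by
    rw [hδα, mul_one_div, div_le_div_iff₀ (by positivity) (by norm_num)]
    linarith
  set h : ℝ := t - s with hhdef
  have hh : 0 < h := by rw [hhdef]; linarith
  set g : ℝ → ℝ := fun u => max (y u - y (u + h)) 0 with hgdef
  have hg_nonneg : ∀ u, 0 ≤ g u := fun u => le_max_right _ _
  have hmap : MapsTo (fun u : ℝ => u + h) (Icc 0 s) (Icc 0 t) := by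
    intro u hu
    show u + h ∈ Icc 0 t
    rw [hhdef]
    exact ⟨by linarith [hu.1], by linarith [hu.2]⟩
  have hg_cont : ContinuousOn g (Icc 0 s) := by
    have h2 : ContinuousOn (fun u : ℝ => y (u + h)) (Icc 0 s) :=
      hy.comp (continuous_id.add continuous_const).continuousOn hmap
    exact ((hy.mono (Icc_subset_Icc le_rfl hst)).sub h2).sup continuousOn_const
  have hbyc : ∀ c : ℝ, 0 ≤ c → c ≤ t →
      ContinuousOn (fun v => b (c - v) (y (c - v))) (Icc 0 c) := by
    intro c hc0 hct
    have hmap2 : MapsTo (fun v : ℝ => c - v) (Icc 0 c) (Icc 0 t) := by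
      intro v hv
      show c - v ∈ Icc 0 t
      exact ⟨by linarith [hv.2], by linarith [hv.1]⟩
    have hcv : ContinuousOn (fun v : ℝ => c - v) (Icc 0 c) :=
      (continuous_const.sub continuous_id).continuousOn
    have hyc : ContinuousOn (fun v => y (c - v)) (Icc 0 c) := hy.comp hcv hmap2
    exact hb_cont.comp (hcv.prodMk hyc) (fun v hv => ⟨(hmap2 hv).1, trivial⟩)
  have hgsub : ∀ u : ℝ, 0 ≤ u → u ≤ s → ContinuousOn (fun v => g (u - v)) (Icc 0 u) := by
    intro u h0 hus
    have hmap3 : MapsTo (fun v : ℝ => u - v) (Icc 0 u) (Icc 0 s) := by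
      intro v hv
      show u - v ∈ Icc 0 s
      exact ⟨by linarith [hv.2], by linarith [hv.1]⟩
    exact hg_cont.comp (continuous_const.sub continuous_id).continuousOn hmap3
  have kern : ∀ a c : ℝ, IntervalIntegrable (fun v : ℝ => α * v ^ (α - 1)) volume a c :=
    fun a c => (intervalIntegral.intervalIntegrable_rpow' (by linarith)).const_mul α
  -- the key Gronwall-type inequality
  have key : ∀ u ∈ Icc (0:ℝ) s,
      g u ≤ L * ∫ v in (0:ℝ)..u, α * (u - v) ^ (α - 1) * g v := by
    intro u hu
    obtain ⟨hu0, hus⟩ := hu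
    have hsh : s + h = t := by rw [hhdef]; ring
    have huh : u + h ≤ t := by linarith
    have huh0 : (0:ℝ) ≤ u + h := by linarith [hh.le]
    have e1 := hy_sol (u + h) huh0 (hofR _ huh)
    have e2 := hy_sol u hu0 (hofR _ (by linarith [hh.le]))
    have hA := intervalIntegral.integral_comp_sub_left (a := (0:ℝ)) (b := u + h)
      (fun v => α * v ^ (α - 1) * b (u + h - v) (y (u + h - v))) (u + h)
    simp only [sub_sub_cancel, sub_self, sub_zero] at hA
    have hB := intervalIntegral.integral_comp_sub_left (a := (0:ℝ)) (b := u)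
      (fun v => α * v ^ (α - 1) * b (u - v) (y (u - v))) u
    simp only [sub_sub_cancel, sub_self, sub_zero] at hB
    have hcF1 : ContinuousOn (fun v => b (u + h - v) (y (u + h - v))) (Icc 0 (u + h)) :=
      hbyc (u + h) huh0 huh
    have IntA1 : IntervalIntegrable
        (fun v => α * v ^ (α - 1) * b (u + h - v) (y (u + h - v))) volume 0 u :=
      (kern 0 u).mul_continuousOn (by
        rw [uIcc_of_le hu0]
        exact hcF1.mono (Icc_subset_Icc le_rfl (by linarith [hh.le])))
    have IntA2 : IntervalIntegrable
        (fun v => α * v ^ (α - 1) * b (u + h - v) (y (u + h - v))) volume u (u + h) :=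
      (kern u (u + h)).mul_continuousOn (by
        rw [uIcc_of_le (by linarith [hh.le] : u ≤ u + h)]
        exact hcF1.mono (Icc_subset_Icc hu0 le_rfl))
    have IntB : IntervalIntegrable
        (fun v => α * v ^ (α - 1) * b (u - v) (y (u - v))) volume 0 u :=
      (kern 0 u).mul_continuousOn (by
        rw [uIcc_of_le hu0]
        exact hbyc u hu0 (by linarith))
    have intD : IntervalIntegrable
        (fun v => α * v ^ (α - 1) * (-(L * g (u - v)))) volume 0 u :=
      (kern 0 u).mul_continuousOn (by
        rw [uIcc_of_le hu0]
        exact (continuousOn_const.mul (hgsub u hu0 hus)).neg)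
    have hsplit := intervalIntegral.integral_add_adjacent_intervals IntA1 IntA2
    have h1 : 0 ≤ ∫ v in u..(u + h), α * v ^ (α - 1) * b (u + h - v) (y (u + h - v)) := by
      apply intervalIntegral.integral_nonneg (by linarith [hh.le])
      intro v hv
      have h0v : 0 ≤ v := le_trans hu0 hv.1
      exact mul_nonneg (mul_nonneg hα.le (Real.rpow_nonneg h0v _))
        (hb_nonneg _ _ (by linarith [hv.2]))
    have hpt : ∀ v ∈ Icc (0:ℝ) u,
        α * v ^ (α - 1) * (-(L * g (u - v)))
          ≤ α * v ^ (α - 1) * b (u + h - v) (y (u + h - v))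
            - α * v ^ (α - 1) * b (u - v) (y (u - v)) := by
      intro v hv
      have hp0 : 0 ≤ u - v := by linarith [hv.2]
      have hps : u - v ≤ s := by linarith [hv.1]
      have hq0 : 0 ≤ u + h - v := by linarith [hh.le]
      have hqt : u + h - v ≤ t := by linarith [hv.1]
      have hpq : u - v + h = u + h - v := by ring
      have hyq := hyR _ (⟨hq0, hqt⟩ : u + h - v ∈ Icc (0:ℝ) t)
      have hyp := hyR _ (⟨hp0, by linarith⟩ : u - v ∈ Icc (0:ℝ) t)
      have step1 : b (u - v) (y (u + h - v)) ≤ b (u + h - v) (y (u + h - v)) :=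
        hb_mono_t _ hp0 hq0 (by linarith [hh.le])
      have step2 : -(L * g (u - v)) ≤ b (u - v) (y (u + h - v)) - b (u - v) (y (u - v)) := by
        rcases le_or_gt (y (u - v)) (y (u + h - v)) with hle | hlt
        · have hbx := hb_mono_x (u - v) hp0 hle
          have hnn : 0 ≤ L * g (u - v) := mul_nonneg hL (hg_nonneg _)
          linarith
        · have hgv : g (u - v) = y (u - v) - y (u + h - v) := by
            rw [hgdef]
            show max (y (u - v) - y (u - v + h)) 0 = _
            rw [hpq]
            exact max_eq_left (by linarith)
          have habs := hL0 (u - v) ⟨hp0, by linarith⟩ (y (u + h - v)) hyq (y (u - v)) hyp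
          have h2 : |y (u + h - v) - y (u - v)| = y (u - v) - y (u + h - v) := by
            rw [abs_of_neg (by linarith)]; ring
          rw [h2] at habs
          have hL0L : L0 ≤ L := le_max_left _ _
          have h3 := (abs_le.1 habs).1
          have h4 : L0 * (y (u - v) - y (u + h - v)) ≤ L * (y (u - v) - y (u + h - v)) :=
            mul_le_mul_of_nonneg_right hL0L (by linarith)
          rw [hgv]; linarith
      have hker : 0 ≤ α * v ^ (α - 1) :=
        mul_nonneg hα.le (Real.rpow_nonneg hv.1 _)
      have hfull : -(L * g (u - v))
          ≤ b (u + h - v) (y (u + h - v)) - b (u - v) (y (u - v)) := by linarith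
      calc α * v ^ (α - 1) * (-(L * g (u - v)))
          ≤ α * v ^ (α - 1) * (b (u + h - v) (y (u + h - v)) - b (u - v) (y (u - v))) :=
            mul_le_mul_of_nonneg_left hfull hker
        _ = α * v ^ (α - 1) * b (u + h - v) (y (u + h - v))
            - α * v ^ (α - 1) * b (u - v) (y (u - v)) := by ring
    have hDle := intervalIntegral.integral_mono_on hu0 intD (IntA1.sub IntB) hpt
    have hsubeq := intervalIntegral.integral_sub IntA1 IntB
    have hD : (∫ v in (0:ℝ)..u, α * v ^ (α - 1) * (-(L * g (u - v))))
        = -(L * ∫ v in (0:ℝ)..u, α * (u - v) ^ (α - 1) * g v) := by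
      have hchg := intervalIntegral.integral_comp_sub_left (a := (0:ℝ)) (b := u)
        (fun x => α * (u - x) ^ (α - 1) * g x) u
      simp only [sub_sub_cancel, sub_self, sub_zero] at hchg
      rw [show (fun v => α * v ^ (α - 1) * (-(L * g (u - v))))
          = fun v => (-L) * (α * v ^ (α - 1) * g (u - v)) from by funext v; ring]
      rw [intervalIntegral.integral_const_mul, hchg]; ring
    have hz' : z u ≤ z (u + h) :=
      hz_mono (mem_Ici.2 hu0) (mem_Ici.2 huh0) (by linarith [hh.le])
    have hI0 : 0 ≤ ∫ v in (0:ℝ)..u, α * (u - v) ^ (α - 1) * g v := by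
      apply intervalIntegral.integral_nonneg hu0
      intro v hv
      exact mul_nonneg (mul_nonneg hα.le (Real.rpow_nonneg (by linarith [hv.2]) _))
        (hg_nonneg _)
    have hwle : y u - y (u + h)
        ≤ L * ∫ v in (0:ℝ)..u, α * (u - v) ^ (α - 1) * g v := by
      rw [e1, e2, hA, hB]
      linarith [hsplit, hDle, hsubeq, hD]
    rw [hgdef]
    show max (y u - y (u + h)) 0 ≤ _
    exact max_le hwle (mul_nonneg hL hI0)
  -- the stepping argument: g vanishes on [0, min (n δ) s]
  have main : ∀ n : ℕ, ∀ u ∈ Icc (0:ℝ) (min ((n:ℝ) * δ) s), g u = 0 := by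
    intro n
    induction n with
    | zero =>
      intro u hu
      simp only [Nat.cast_zero, zero_mul, min_eq_left hs] at hu
      have hu0 : u = 0 := le_antisymm hu.2 hu.1
      subst hu0
      have hk := key 0 ⟨le_rfl, hs⟩
      rw [intervalIntegral.integral_same, mul_zero] at hk
      exact le_antisymm hk (hg_nonneg 0)
    | succ n ih =>
      intro u hu
      push_cast at hu
      rcases le_or_gt s ((n:ℝ) * δ) with hcase | hcase
      · exact ih u ⟨hu.1, by
          rw [min_eq_right hcase]
          exact le_trans hu.2 (min_le_right _ _)⟩
      · have ha0 : 0 ≤ (n:ℝ) * δ := mul_nonneg (Nat.cast_nonneg n) hδpos.le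
        have hamin : min ((n:ℝ) * δ) s = (n:ℝ) * δ := min_eq_left hcase.le
        have hac : (n:ℝ) * δ ≤ min (((n:ℝ) + 1) * δ) s :=
          le_min (by nlinarith [hδpos.le]) hcase.le
        have hcs : min (((n:ℝ) + 1) * δ) s ≤ s := min_le_right _ _
        have hsubIcc : Icc ((n:ℝ) * δ) (min (((n:ℝ) + 1) * δ) s) ⊆ Icc 0 s :=
          fun v hv => ⟨le_trans ha0 hv.1, le_trans hv.2 hcs⟩
        obtain ⟨x, hxmem, hxmax⟩ := isCompact_Icc.exists_isMaxOn (nonempty_Icc.2 hac)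
          (hg_cont.mono hsubIcc)
        have hx0 : 0 ≤ x := le_trans ha0 hxmem.1
        have hxs : x ≤ s := le_trans hxmem.2 hcs
        have hk := key x ⟨hx0, hxs⟩
        have hIccsub1 : Icc (0:ℝ) ((n:ℝ) * δ) ⊆ Icc 0 s :=
          Icc_subset_Icc le_rfl hcase.le
        have hIccsub2 : Icc ((n:ℝ) * δ) x ⊆ Icc 0 s :=
          fun v hv => ⟨le_trans ha0 hv.1, le_trans hv.2 hxs⟩
        have int1 : IntervalIntegrable (fun v => α * (x - v) ^ (α - 1) * g v)
            volume 0 ((n:ℝ) * δ) :=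
          (volterra_kernel_integrable hα x 0 _).mul_continuousOn (by
            rw [uIcc_of_le ha0]
            exact hg_cont.mono hIccsub1)
        have int2 : IntervalIntegrable (fun v => α * (x - v) ^ (α - 1) * g v)
            volume ((n:ℝ) * δ) x :=
          (volterra_kernel_integrable hα x _ _).mul_continuousOn (by
            rw [uIcc_of_le hxmem.1]
            exact hg_cont.mono hIccsub2)
        have hzero : (∫ v in (0:ℝ)..((n:ℝ) * δ), α * (x - v) ^ (α - 1) * g v) = 0 := by
          have heq : EqOn (fun v => α * (x - v) ^ (α - 1) * g v) (fun _ => 0)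
              (Set.uIcc (0:ℝ) ((n:ℝ) * δ)) := by
            intro v hv
            rw [uIcc_of_le ha0] at hv
            have hgv : g v = 0 := ih v ⟨hv.1, by rw [hamin]; exact hv.2⟩
            simp [hgv]
          rw [intervalIntegral.integral_congr heq]
          simp
        have hsplit2 := intervalIntegral.integral_add_adjacent_intervals int1 int2
        have hbound : (∫ v in ((n:ℝ) * δ)..x, α * (x - v) ^ (α - 1) * g v)
            ≤ ∫ v in ((n:ℝ) * δ)..x, α * (x - v) ^ (α - 1) * g x := by
          apply intervalIntegral.integral_mono_on hxmem.1 int2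
            ((volterra_kernel_integrable hα x _ _).mul_const _)
          intro v hv
          have hker : 0 ≤ α * (x - v) ^ (α - 1) :=
            mul_nonneg hα.le (Real.rpow_nonneg (by linarith [hv.2]) _)
          exact mul_le_mul_of_nonneg_left (hxmax ⟨hv.1, le_trans hv.2 hxmem.2⟩) hker
        have hval : (∫ v in ((n:ℝ) * δ)..x, α * (x - v) ^ (α - 1) * g x)
            = (x - (n:ℝ) * δ) ^ α * g x := by
          rw [intervalIntegral.integral_mul_const, volterra_kernel_integral hα]
        have hxa : (x - (n:ℝ) * δ) ^ α ≤ δ ^ α := by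
          apply Real.rpow_le_rpow (by linarith [hxmem.1]) ?_ hα.le
          have hc1 : min (((n:ℝ) + 1) * δ) s ≤ ((n:ℝ) + 1) * δ := min_le_left _ _
          have hc2 := le_trans hxmem.2 hc1
          nlinarith
        have hgx : 0 ≤ g x := hg_nonneg x
        have hgx0 : g x = 0 := by
          have chain : g x ≤ L * ((x - (n:ℝ) * δ) ^ α * g x) := by
            calc g x ≤ L * ∫ v in (0:ℝ)..x, α * (x - v) ^ (α - 1) * g v := hk
              _ = L * ((∫ v in (0:ℝ)..((n:ℝ) * δ), α * (x - v) ^ (α - 1) * g v)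
                  + ∫ v in ((n:ℝ) * δ)..x, α * (x - v) ^ (α - 1) * g v) := by
                  rw [hsplit2]
              _ = L * ∫ v in ((n:ℝ) * δ)..x, α * (x - v) ^ (α - 1) * g v := by
                  rw [hzero, zero_add]
              _ ≤ L * ((x - (n:ℝ) * δ) ^ α * g x) := by
                  apply mul_le_mul_of_nonneg_left _ hL
                  rw [← hval]; exact hbound
          have chain2 : L * ((x - (n:ℝ) * δ) ^ α * g x) ≤ (1 / 2) * g x := by
            calc L * ((x - (n:ℝ) * δ) ^ α * g x) ≤ L * (δ ^ α * g x) :=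
                  mul_le_mul_of_nonneg_left (mul_le_mul_of_nonneg_right hxa hgx) hL
              _ = (L * δ ^ α) * g x := by ring
              _ ≤ (1 / 2) * g x := mul_le_mul_of_nonneg_right hLδ hgx
          linarith
        rcases le_or_gt u ((n:ℝ) * δ) with hua | hua
        · exact ih u ⟨hu.1, by rw [hamin]; exact hua⟩
        · exact le_antisymm (le_trans (hxmax ⟨hua.le, hu.2⟩) hgx0.le) (hg_nonneg u)
  obtain ⟨n, hn⟩ := exists_nat_ge (s / δ)
  have hsn : s ≤ (n:ℝ) * δ := by
    rw [div_le_iff₀ hδpos] at hn; linarith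
  have hgs : g s = 0 := main n s ⟨hs, le_min hsn le_rfl⟩
  rw [hgdef] at hgs
  have hgs' : max (y s - y (s + h)) 0 = 0 := hgs
  have h5 : y s - y (s + h) ≤ 0 := by
    have := le_max_left (y s - y (s + h)) 0
    rw [hgs'] at this; exact this
  have hsh : s + h = t := by rw [hhdef]; ring
  rw [hsh] at h5
  linarith
end
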